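/- Let G be a finite simple graph with vertex set V, and for each vertex v let d_v denote its degree. Then the independence number α(G) satisfies α(G) ≥ ∑_{v ∈ V} 1/(1 + d_v). -/

import Mathlib

open Finset

private lemma caro_wei_aux {V : Type*} [Fintype V] [DecidableEq V] (G : SimpleGraph V)
    [DecidableRel G.Adj] :
    ∀ n : ℕ, ∀ A : Finset V, A.card ≤ n →
    ∃ s : Finset V, s ⊆ A ∧ (∀ u ∈ s, ∀ v ∈ s, ¬ G.Adj u v) ∧
      (∑ v ∈ A, (1 : ℝ) / (1 + (A.filter (G.Adj v)).card)) ≤ s.card := by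
  intro n
  induction n with
  | zero =>
    intro A hA
    have : A = ∅ := Finset.card_eq_zero.mp (Nat.le_zero.mp hA)
    subst this
    exact ⟨∅, by simp⟩
  | succ n ih =>
    intro A hA
    rcases A.eq_empty_or_nonempty with rfl | hne
    · exact ⟨∅, by simp⟩
    obtain ⟨v, hvA, hvmin⟩ := Finset.exists_min_image A (fun u => (A.filter (G.Adj u)).card) hne
    set N : Finset V := insert v (A.filter (G.Adj v)) with hN
    have hNA : N ⊆ A := by
      intro x hx
      rcases Finset.mem_insert.mp hx with rfl | hx
      · exact hvA
      · exact (Finset.mem_filter.mp hx).1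
    set B : Finset V := A \ N with hB
    have hBA : B ⊆ A := Finset.sdiff_subset
    have hvN : v ∈ N := Finset.mem_insert_self _ _
    have hBcard : B.card ≤ n := by
      have h1 : B.card < A.card := by
        apply Finset.card_lt_card
        constructor
        · exact hBA
        · intro h
          exact (Finset.mem_sdiff.mp (h hvA)).2 hvN
      omega
    obtain ⟨s, hsB, hsind, hssum⟩ := ih B hBcard
    have hvns : v ∉ s := fun h => (Finset.mem_sdiff.mp (hsB h)).2 hvN
    refine ⟨insert v s, ?_, ?_, ?_⟩
    · intro x hx
      rcases Finset.mem_insert.mp hx with rfl | hx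
      · exact hvA
      · exact hBA (hsB hx)
    · -- independence
      have hvnadj : ∀ u ∈ s, ¬ G.Adj v u := by
        intro u hu hadj
        exact (Finset.mem_sdiff.mp (hsB hu)).2
          (Finset.mem_insert_of_mem (Finset.mem_filter.mpr ⟨hBA (hsB hu), hadj⟩))
      intro x hx y hy hadj
      rcases Finset.mem_insert.mp hx with hxe | hx'
      · rcases Finset.mem_insert.mp hy with hye | hy'
        · subst hxe; subst hye; exact G.loopless.irrefl _ hadj
        · subst hxe; exact hvnadj y hy' hadj
      · rcases Finset.mem_insert.mp hy with hye | hy'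
        · subst hye; exact hvnadj x hx' hadj.symm
        · exact hsind x hx' y hy' hadj
    · -- sum bound
      have hcard : (insert v s).card = s.card + 1 := Finset.card_insert_of_notMem hvns
      have hsplit : A = N ∪ B := by
        rw [hB, Finset.union_sdiff_of_subset hNA]
      have hdisj : Disjoint N B := Finset.disjoint_sdiff
      have hNcard : (N : Finset V).card = (A.filter (G.Adj v)).card + 1 := by
        rw [hN, Finset.card_insert_of_notMem]
        intro h
        exact G.loopless.irrefl v (Finset.mem_filter.mp h).2
      -- bound on N-part
      have hNsum : (∑ u ∈ N, (1 : ℝ) / (1 + (A.filter (G.Adj u)).card)) ≤ 1 := by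
        have hle : ∀ u ∈ N, (1 : ℝ) / (1 + (A.filter (G.Adj u)).card)
            ≤ 1 / (1 + (A.filter (G.Adj v)).card) := by
          intro u hu
          apply one_div_le_one_div_of_le
          · exact add_pos_of_pos_of_nonneg one_pos (Nat.cast_nonneg _)
          · have := hvmin u (hNA hu)
            have : ((A.filter (G.Adj v)).card : ℝ) ≤ (A.filter (G.Adj u)).card := by
              exact_mod_cast this
            linarith
        calc (∑ u ∈ N, (1 : ℝ) / (1 + (A.filter (G.Adj u)).card))
            ≤ ∑ u ∈ N, (1 : ℝ) / (1 + (A.filter (G.Adj v)).card) := Finset.sum_le_sum hle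
          _ = N.card * (1 / (1 + (A.filter (G.Adj v)).card)) := by
              rw [Finset.sum_const, nsmul_eq_mul]
          _ = 1 := by
              rw [hNcard]
              have h : (0:ℝ) < 1 + (A.filter (G.Adj v)).card :=
                add_pos_of_pos_of_nonneg one_pos (Nat.cast_nonneg _)
              rw [mul_one_div, div_eq_one_iff_eq h.ne']
              push_cast
              ring
      -- bound on B-part
      have hBsum : (∑ u ∈ B, (1 : ℝ) / (1 + (A.filter (G.Adj u)).card))
          ≤ ∑ u ∈ B, (1 : ℝ) / (1 + (B.filter (G.Adj u)).card) := by
        apply Finset.sum_le_sum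
        intro u hu
        apply one_div_le_one_div_of_le
        · exact add_pos_of_pos_of_nonneg one_pos (Nat.cast_nonneg _)
        · have : (B.filter (G.Adj u)).card ≤ (A.filter (G.Adj u)).card :=
            Finset.card_le_card (Finset.filter_subset_filter _ hBA)
          have : ((B.filter (G.Adj u)).card : ℝ) ≤ (A.filter (G.Adj u)).card := by
            exact_mod_cast this
          linarith
      have hAsum : (∑ u ∈ A, (1 : ℝ) / (1 + (A.filter (G.Adj u)).card))
          = (∑ u ∈ N, (1 : ℝ) / (1 + (A.filter (G.Adj u)).card))
            + ∑ u ∈ B, (1 : ℝ) / (1 + (A.filter (G.Adj u)).card) := by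
        rw [← Finset.sum_union hdisj, ← hsplit]
      rw [hAsum, hcard]
      push_cast
      linarith

/-- Caro-Wei bound: there is an independent set of size at least `∑_v 1/(1+deg v)`. -/
theorem caro_wei {V : Type*} [Fintype V] [DecidableEq V] (G : SimpleGraph V)
    [DecidableRel G.Adj] :
    ∃ s : Finset V, (∀ u ∈ s, ∀ v ∈ s, ¬ G.Adj u v) ∧
      (∑ v : V, (1 : ℝ) / (1 + G.degree v)) ≤ s.card := by
  obtain ⟨s, _, hind, hsum⟩ := caro_wei_aux G (Fintype.card V) Finset.univ le_rfl
  refine ⟨s, hind, ?_⟩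
  calc (∑ v : V, (1 : ℝ) / (1 + G.degree v))
      = ∑ v ∈ Finset.univ, (1 : ℝ) / (1 + (Finset.univ.filter (G.Adj v)).card) := by
        apply Finset.sum_congr rfl
        intro v _
        rw [SimpleGraph.degree, SimpleGraph.neighborFinset_eq_filter]
    _ ≤ s.card := hsum
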